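/- arXiv:0807.2423 — 2 statements merged into one kernel-verified Lean document; each statement's English description precedes it below -/
import Mathlib

section
/- (Pressure in region I) Fix γ ∈ (0,1) and α, β ∈ ((1−γ)/2, 1]. Let z_min = max{0, 1−2α, 1−2β} and for each positive integer n define f_n : (z_min, 1] → ℝ by f_n(z) = α(1+z)/(z(z+2α−1)) + n/z + β(1+z)/(z(z+2β−1)). Then for all sufficiently large n there is a unique z_n ∈ (z_min, 1] with f_n(z_n) = n/γ, and z_n → γ as n → ∞. -/
open Filter Topology

noncomputable section

namespace TASEP

/-- The expected system length in the pressure ensemble with `n` second class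
particles, as a function of `z = √(1 − e^{−p})`:
`f_n(z) = α(1+z)/(z(z+2α−1)) + n/z + β(1+z)/(z(z+2β−1))`. -/
def expLength (α β : ℝ) (n : ℕ) (z : ℝ) : ℝ :=
  α * (1 + z) / (z * (z + 2 * α - 1)) + (n : ℝ) / z +
    β * (1 + z) / (z * (z + 2 * β - 1))

lemma term_lt (a z₁ z₂ : ℝ) (ha : 0 < a) (hz₁ : 0 < z₁)
    (hc : 0 < z₁ + 2 * a - 1) (h : z₁ < z₂) :
    a * (1 + z₂) / (z₂ * (z₂ + 2 * a - 1)) < a * (1 + z₁) / (z₁ * (z₁ + 2 * a - 1)) := by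
  have hz₂ : 0 < z₂ := hz₁.trans h
  have hc₂ : 0 < z₂ + 2 * a - 1 := by linarith
  rw [div_lt_div_iff₀ (by positivity) (by positivity)]
  nlinarith [mul_pos (mul_pos ha (sub_pos.2 h))
    (show (0:ℝ) < z₁ + z₂ + (2*a-1) + z₁*z₂ by nlinarith)]

lemma expLength_anti (α β : ℝ) (n : ℕ) (hα : 0 < α) (hβ : 0 < β) :
    StrictAntiOn (expLength α β n) (Set.Ioc (max (max 0 (1 - 2 * α)) (1 - 2 * β)) 1) := by
  intro z₁ h₁ z₂ h₂ h12
  have hz₁0 : 0 < z₁ := lt_of_le_of_lt (le_max_of_le_left (le_max_left _ _)) h₁.1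
  have hcα : 0 < z₁ + 2 * α - 1 := by
    have := lt_of_le_of_lt (le_max_of_le_left (le_max_right 0 (1 - 2*α))) h₁.1
    linarith
  have hcβ : 0 < z₁ + 2 * β - 1 := by
    have := lt_of_le_of_lt (le_max_right _ _) h₁.1
    linarith
  have t1 := term_lt α z₁ z₂ hα hz₁0 hcα h12
  have t3 := term_lt β z₁ z₂ hβ hz₁0 hcβ h12
  have t2 : (n : ℝ) / z₂ ≤ (n : ℝ) / z₁ := by
    gcongr
  simp only [expLength]
  linarith

/-- pressure in region I: for `γ ∈ (0,1)` and
`α, β ∈ ((1−γ)/2, 1]`, for all sufficiently large `n` there is a unique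
`z_n ∈ (z_min, 1]` with `f_n(z_n) = n/γ`, where
`z_min = max{0, 1−2α, 1−2β}`, and `z_n → γ` as `n → ∞`. -/
theorem pressure_region_I (γ α β : ℝ)
    (hγ : γ ∈ Set.Ioo (0 : ℝ) 1)
    (hα : α ∈ Set.Ioc ((1 - γ) / 2) 1) (hβ : β ∈ Set.Ioc ((1 - γ) / 2) 1) :
    (∀ᶠ n : ℕ in atTop,
      ∃! z : ℝ, z ∈ Set.Ioc (max (max 0 (1 - 2 * α)) (1 - 2 * β)) 1 ∧
        expLength α β n z = (n : ℝ) / γ) ∧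
    (∀ zs : ℕ → ℝ,
      (∀ᶠ n : ℕ in atTop,
        zs n ∈ Set.Ioc (max (max 0 (1 - 2 * α)) (1 - 2 * β)) 1 ∧
          expLength α β n (zs n) = (n : ℝ) / γ) →
      Tendsto zs atTop (𝓝 γ)) := by
  obtain ⟨hγ0, hγ1⟩ := hγ
  obtain ⟨hα1, hα2⟩ := hα
  obtain ⟨hβ1, hβ2⟩ := hβ
  have hα0 : 0 < α := by linarith
  have hβ0 : 0 < β := by linarith
  set m := max (max 0 (1 - 2 * α)) (1 - 2 * β) with hm
  have hm0 : 0 ≤ m := le_max_of_le_left (le_max_left _ _)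
  have hmγ : m < γ := max_lt (max_lt hγ0 (by linarith)) (by linarith)
  have anti := expLength_anti α β
  constructor
  · -- existence and uniqueness for large n
    have hev : ∀ᶠ n : ℕ in atTop, (2 * γ / (1 - γ) : ℝ) ≤ (n : ℝ) :=
      tendsto_natCast_atTop_atTop.eventually_ge_atTop _
    filter_upwards [hev] with n hn
    -- f 1 = n + 2 ≤ n/γ
    have e1 : expLength α β n 1 = (n : ℝ) + 2 := by
      simp only [expLength]
      rw [show (1:ℝ) * (1 + 2 * α - 1) = 2 * α by ring,
          show (1:ℝ) * (1 + 2 * β - 1) = 2 * β by ring, div_one]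
      field_simp
      ring
    have hle : (n : ℝ) + 2 ≤ (n : ℝ) / γ := by
      rw [le_div_iff₀ hγ0]
      have := (div_le_iff₀ (by linarith : (0:ℝ) < 1 - γ)).mp hn
      nlinarith
    -- f γ ≥ n/γ
    have hγc : 0 < γ + 2 * α - 1 := by linarith
    have hγcβ : 0 < γ + 2 * β - 1 := by linarith
    have hfγ : (n : ℝ) / γ ≤ expLength α β n γ := by
      have hp1 : 0 < α * (1 + γ) / (γ * (γ + 2 * α - 1)) :=
        div_pos (by nlinarith) (by positivity)
      have hp3 : 0 < β * (1 + γ) / (γ * (γ + 2 * β - 1)) :=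
        div_pos (by nlinarith) (by positivity)
      simp only [expLength]
      linarith
    have hcont : ContinuousOn (expLength α β n) (Set.Icc γ 1) := by
      apply ContinuousOn.add
      apply ContinuousOn.add
      · apply ContinuousOn.div (by fun_prop) (by fun_prop)
        intro z hz
        have : 0 < z * (z + 2 * α - 1) :=
          mul_pos (lt_of_lt_of_le hγ0 hz.1) (by linarith [hz.1])
        exact this.ne'
      · apply ContinuousOn.div (by fun_prop) (by fun_prop)
        intro z hz
        exact (lt_of_lt_of_le hγ0 hz.1).ne'
      · apply ContinuousOn.div (by fun_prop) (by fun_prop)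
        intro z hz
        have : 0 < z * (z + 2 * β - 1) :=
          mul_pos (lt_of_lt_of_le hγ0 hz.1) (by linarith [hz.1])
        exact this.ne'
    have hivt := intermediate_value_Icc' hγ1.le hcont
    have hmem : (n : ℝ) / γ ∈ Set.Icc (expLength α β n 1) (expLength α β n γ) := by
      constructor
      · rw [e1]; exact hle
      · exact hfγ
    obtain ⟨z, hz, hfz⟩ := hivt hmem
    have hzmem : z ∈ Set.Ioc m 1 := ⟨lt_of_lt_of_le hmγ hz.1, hz.2⟩
    refine ⟨z, ⟨hzmem, hfz⟩, ?_⟩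
    rintro y ⟨hy, hfy⟩
    exact (anti n hα0 hβ0).injOn hy hzmem (hfy.trans hfz.symm)
  · -- convergence
    intro zs hzs
    rw [Metric.tendsto_nhds]
    intro ε hε
    set ε' := min ε (min ((γ - m) / 2) ((1 - γ) / 2)) with hε'
    have hε'0 : 0 < ε' := lt_min hε (lt_min (by linarith) (by linarith))
    have hε'm : ε' ≤ (γ - m) / 2 := le_trans (min_le_right _ _) (min_le_left _ _)
    have hε'1 : ε' ≤ (1 - γ) / 2 := le_trans (min_le_right _ _) (min_le_right _ _)
    have hε'ε : ε' ≤ ε := min_le_left _ _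
    have hlo : m < γ - ε' := by linarith
    have hlomem : γ - ε' ∈ Set.Ioc m 1 := ⟨hlo, by linarith⟩
    have hhimem : γ + ε' ∈ Set.Ioc m 1 := ⟨by linarith, by linarith⟩
    have hlopos : 0 < γ - ε' := lt_of_le_of_lt hm0 hlo
    -- eventual inequalities
    have hd : 0 < 1 / (γ - ε') - 1 / γ := by
      rw [sub_pos]
      apply one_div_lt_one_div_of_lt hlopos
      linarith
    have hd' : 0 < 1 / γ - 1 / (γ + ε') := by
      rw [sub_pos]
      apply one_div_lt_one_div_of_lt hγ0
      linarith
    set K : ℝ := α * (1 + (γ - ε')) / ((γ - ε') * ((γ - ε') + 2 * α - 1)) +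
      β * (1 + (γ - ε')) / ((γ - ε') * ((γ - ε') + 2 * β - 1)) with hK
    set K' : ℝ := α * (1 + (γ + ε')) / ((γ + ε') * ((γ + ε') + 2 * α - 1)) +
      β * (1 + (γ + ε')) / ((γ + ε') * ((γ + ε') + 2 * β - 1)) with hK'
    have ha : ∀ᶠ n : ℕ in atTop, (n : ℝ) / γ < expLength α β n (γ - ε') := by
      have htend : Tendsto (fun n : ℕ => (n : ℝ) * (1 / (γ - ε') - 1 / γ) + K) atTop atTop :=
        tendsto_atTop_add_const_right _ K (tendsto_natCast_atTop_atTop.atTop_mul_const hd)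
      filter_upwards [htend.eventually_gt_atTop 0] with n hn
      have : expLength α β n (γ - ε') = (n : ℝ) / (γ - ε') + K := by
        simp only [expLength, hK]; ring
      rw [this]
      have heq : (n : ℝ) / (γ - ε') - (n : ℝ) / γ = (n : ℝ) * (1 / (γ - ε') - 1 / γ) := by
        ring
      linarith
    have hb : ∀ᶠ n : ℕ in atTop, expLength α β n (γ + ε') < (n : ℝ) / γ := by
      have htend : Tendsto (fun n : ℕ => (n : ℝ) * (1 / γ - 1 / (γ + ε')) - K') atTop atTop :=
        tendsto_atTop_add_const_right _ (-K') (tendsto_natCast_atTop_atTop.atTop_mul_const hd')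
      filter_upwards [htend.eventually_gt_atTop 0] with n hn
      have : expLength α β n (γ + ε') = (n : ℝ) / (γ + ε') + K' := by
        simp only [expLength, hK']; ring
      rw [this]
      have heq : (n : ℝ) / γ - (n : ℝ) / (γ + ε') = (n : ℝ) * (1 / γ - 1 / (γ + ε')) := by
        ring
      linarith
    filter_upwards [hzs, ha, hb] with n hn h1 h2
    obtain ⟨hmem, hfeq⟩ := hn
    have hgt : γ - ε' < zs n := by
      by_contra hcon
      push_neg at hcon
      have := (anti n hα0 hβ0).antitoneOn hmem hlomem hcon
      rw [hfeq] at this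
      linarith
    have hlt : zs n < γ + ε' := by
      by_contra hcon
      push_neg at hcon
      have := (anti n hα0 hβ0).antitoneOn hhimem hmem hcon
      rw [hfeq] at this
      linarith
    rw [Real.dist_eq, abs_lt]
    constructor <;> linarith

end TASEP
end
end

section
/- For 0 < α < 1/2, the one species partition function satisfies lim_{j→∞} (α(1−α))^j · Z^{α,1}(j, 0) = (1−2α)/(1−α)². -/
open scoped BigOperators Classical
open Filter Topology

noncomputable section

namespace TASEP

/-- The matrix `X₀`: ones on the diagonal and the subdiagonal. -/
def X0 : ℕ → ℕ → ℝ := fun i k => if k = i ∨ k + 1 = i then 1 else 0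

/-- The matrix `X₁`: ones on the diagonal and the superdiagonal. -/
def X1 : ℕ → ℕ → ℝ := fun i k => if k = i ∨ k = i + 1 then 1 else 0

/-- The matrix `X₂`: a single one in the `(0,0)` entry. -/
def X2 : ℕ → ℕ → ℝ := fun i k => if i = 0 ∧ k = 0 then 1 else 0

/-- The matrix associated to a species label (`0` = hole, `1` = first class
particle, `2` = second class particle). -/
def Xmat : Fin 3 → ℕ → ℕ → ℝ
  | 0 => X0
  | 1 => X1
  | 2 => X2

/-- Product of two infinite matrices (well defined here since the relevant
matrices have finitely many nonzero entries in each row and column). -/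
def mul (A B : ℕ → ℕ → ℝ) : ℕ → ℕ → ℝ := fun i k => ∑' j, A i j * B j k

/-- The row vector `⟨W_α|`, with `i`-th entry `((1-α)/α)^i`. -/
def W (α : ℝ) : ℕ → ℝ := fun i => ((1 - α) / α) ^ i

/-- The column vector `|V_β⟩`, with `i`-th entry `((1-β)/β)^i`. -/
def V (β : ℝ) : ℕ → ℝ := fun i => ((1 - β) / β) ^ i

/-- Row vector times matrix. -/
def rowMul (v : ℕ → ℝ) (A : ℕ → ℕ → ℝ) : ℕ → ℝ := fun k => ∑' i, v i * A i k

/-- Matrix times column vector. -/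
def colMul (A : ℕ → ℕ → ℝ) (v : ℕ → ℝ) : ℕ → ℝ := fun i => ∑' k, A i k * v k

/-- Row vector times a word of matrices. -/
def rowWord (v : ℕ → ℝ) : List (Fin 3) → ℕ → ℝ
  | [] => v
  | a :: rest => rowWord (rowMul v (Xmat a)) rest

/-- Matrix element `⟨v| X_{σ₁} ⋯ X_{σ_p} |w⟩` of a word of matrices. -/
def pairing (v : ℕ → ℝ) (word : List (Fin 3)) (w : ℕ → ℝ) : ℝ :=
  ∑' i, rowWord v word i * w i

/-- Weight `w^{α,β}(τ) = ⟨W_α| X_{τ₁} ⋯ X_{τ_L} |V_β⟩` of a configuration. -/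
def wt (α β : ℝ) {L : ℕ} (τ : Fin L → Fin 3) : ℝ :=
  pairing (W α) (List.ofFn τ) (V β)

/-- Number of second class particles in a configuration. -/
def numTwos {L : ℕ} (τ : Fin L → Fin 3) : ℕ :=
  (Finset.univ.filter fun i => τ i = 2).card

/-- `Y L n`: configurations of length `L` with exactly `n` second class particles. -/
def Y (L n : ℕ) : Finset (Fin L → Fin 3) :=
  Finset.univ.filter fun τ => numTwos τ = n

/-- The partition function `Z^{α,β}(L,n)`. -/
def Z (α β : ℝ) (L n : ℕ) : ℝ := ∑ τ ∈ Y L n, wt α β τ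

/-- Value of a configuration at the 1-based site `s` (defaulting to `0` off the lattice). -/
def val {L : ℕ} (τ : Fin L → Fin 3) (s : ℕ) : Fin 3 :=
  if h : 1 ≤ s ∧ s ≤ L then τ ⟨s - 1, by omega⟩ else 0

/-- `E α β L n r sites j` is `E_r(L,n;i₁,…,i_r;j)`: the sum of weights of
configurations in `Y L n` with a first class particle at each of the sites
`i₁,…,i_{r-1}` and a block of `j` consecutive first class particles starting
at site `i_r`. -/
def E (α β : ℝ) (L n r : ℕ) (sites : Fin r → ℕ) (j : ℕ) : ℝ :=
  ∑ τ ∈ (Y L n).filter (fun τ =>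
      (∀ m : Fin r, (m : ℕ) + 1 ≠ r → val τ (sites m) = 1) ∧
      (∀ m : Fin r, (m : ℕ) + 1 = r → ∀ t ∈ Finset.range j, val τ (sites m + t) = 1)),
    wt α β τ

end TASEP

namespace TASEP

/-- Transfer operator: row vector times `X0 + X1`. -/
def Tr (v : ℕ → ℝ) : ℕ → ℝ :=
  fun k => (v k + v (k + 1)) + (v k + if k = 0 then 0 else v (k - 1))

lemma rowMul_X0 (v : ℕ → ℝ) : rowMul v X0 = fun k => v k + v (k + 1) := by
  funext k
  have h : ∀ i ∉ ({k, k + 1} : Finset ℕ), v i * X0 i k = 0 := by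
    intro i hi
    simp only [Finset.mem_insert, Finset.mem_singleton] at hi
    push_neg at hi
    rw [X0, if_neg (by omega), mul_zero]
  show ∑' i, v i * X0 i k = _
  rw [tsum_eq_sum h, Finset.sum_pair (by omega : k ≠ k + 1)]
  simp [X0]

lemma rowMul_X1 (v : ℕ → ℝ) :
    rowMul v X1 = fun k => v k + if k = 0 then 0 else v (k - 1) := by
  funext k
  show ∑' i, v i * X1 i k = _
  match k with
  | 0 =>
    rw [tsum_eq_single 0 (by intro i hi; rw [X1, if_neg (by omega), mul_zero])]
    simp [X1]
  | (m + 1) =>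
    have h : ∀ i ∉ ({m, m + 1} : Finset ℕ), v i * X1 i (m + 1) = 0 := by
      intro i hi
      simp only [Finset.mem_insert, Finset.mem_singleton] at hi
      push_neg at hi
      rw [X1, if_neg (by omega), mul_zero]
    rw [tsum_eq_sum h, Finset.sum_pair (by omega : m ≠ m + 1)]
    simp [X1]
    ring

lemma pairing_V_one (v : ℕ → ℝ) (w : List (Fin 3)) :
    pairing v w (V 1) = rowWord v w 0 := by
  rw [pairing, tsum_eq_single 0 (by
    intro i hi
    have hV : V 1 i = 0 := by rw [V]; norm_num [zero_pow hi]
    rw [hV, mul_zero])]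
  rw [V]
  norm_num

lemma numTwos_cons {L : ℕ} (a : Fin 3) (σ : Fin L → Fin 3) :
    numTwos (Fin.cons a σ) = (if a = 2 then 1 else 0) + numTwos σ := by
  unfold numTwos
  rw [Finset.card_filter, Finset.card_filter, Fin.sum_univ_succ]
  simp

lemma Tr_add (u w : ℕ → ℝ) :
    Tr (fun k => u k + w k) = fun k => Tr u k + Tr w k := by
  funext k
  simp only [Tr]
  split_ifs <;> ring

lemma iterate_Tr_add (j : ℕ) : ∀ u w : ℕ → ℝ,
    Tr^[j] (fun k => u k + w k) = fun k => Tr^[j] u k + Tr^[j] w k := by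
  induction j with
  | zero => intro u w; simp
  | succ j ih =>
    intro u w
    rw [Function.iterate_succ_apply, Function.iterate_succ_apply,
      Function.iterate_succ_apply, Tr_add, ih]

lemma rowMul_X0_add_X1 (v : ℕ → ℝ) :
    (fun k => rowMul v X0 k + rowMul v X1 k) = Tr v := by
  funext k
  rw [rowMul_X0, rowMul_X1]
  rfl

lemma sum_Y_eq (j : ℕ) : ∀ (v : ℕ → ℝ) (k : ℕ),
    ∑ τ ∈ Y j 0, rowWord v (List.ofFn τ) k = (Tr^[j] v) k := by
  induction j with
  | zero =>
    intro v k
    have hY : Y 0 0 = Finset.univ := by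
      ext τ; simp [Y, numTwos]
    rw [hY]
    simp [Fintype.sum_unique, rowWord]
  | succ j ih =>
    intro v k
    rw [show Y (j+1) 0 = Finset.univ.filter (fun τ => numTwos τ = 0) from rfl,
      Finset.sum_filter]
    rw [← Fintype.sum_equiv (Fin.consEquiv (fun _ => Fin 3))
      (fun p => if numTwos (Fin.cons p.1 p.2) = 0 then
        rowWord v (List.ofFn (Fin.cons p.1 p.2)) k else 0) _ (fun p => rfl)]
    rw [Fintype.sum_prod_type]
    rw [Fin.sum_univ_three]
    have hrow : ∀ (a : Fin 3) (σ : Fin j → Fin 3),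
        rowWord v (List.ofFn (Fin.cons a σ)) k
          = rowWord (rowMul v (Xmat a)) (List.ofFn σ) k := by
      intro a σ
      rw [List.ofFn_succ]
      simp [rowWord]
    have h2 : ∀ σ : Fin j → Fin 3,
        (if numTwos (Fin.cons (2 : Fin 3) σ) = 0 then
          rowWord v (List.ofFn (Fin.cons (2 : Fin 3) σ)) k else 0) = 0 := by
      intro σ
      rw [if_neg]
      rw [numTwos_cons]
      simp
    rw [Finset.sum_congr rfl (fun σ _ => h2 σ)]
    have h01 : ∀ a : Fin 3, a ≠ 2 →
        ∑ σ : Fin j → Fin 3, (if numTwos (Fin.cons a σ) = 0 then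
          rowWord v (List.ofFn (Fin.cons a σ)) k else 0)
        = (Tr^[j] (rowMul v (Xmat a))) k := by
      intro a ha
      have : ∀ σ : Fin j → Fin 3,
          (if numTwos (Fin.cons a σ) = 0 then
            rowWord v (List.ofFn (Fin.cons a σ)) k else 0)
          = (if numTwos σ = 0 then
              rowWord (rowMul v (Xmat a)) (List.ofFn σ) k else 0) := by
        intro σ
        rw [numTwos_cons, if_neg ha, hrow]
        simp
      rw [Finset.sum_congr rfl (fun σ _ => this σ)]
      rw [← Finset.sum_filter]
      exact ih (rowMul v (Xmat a)) k
    rw [h01 0 (by decide), h01 1 (by decide)]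
    rw [Finset.sum_const_zero, add_zero]
    have : (fun m => rowMul v X0 m + rowMul v X1 m) = Tr v := rowMul_X0_add_X1 v
    rw [Function.iterate_succ_apply, ← this, iterate_Tr_add]
    rfl

lemma Z_eq_iter (α : ℝ) (j : ℕ) : Z α 1 j 0 = (Tr^[j] (W α)) 0 := by
  rw [Z, Finset.sum_congr rfl (fun τ _ => by rw [wt, pairing_V_one]), sum_Y_eq]

/-- Extended binomial coefficient, vanishing for negative lower index. -/
def fB (n : ℕ) (m : ℤ) : ℝ := if 0 ≤ m then (n.choose m.toNat : ℝ) else 0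

lemma fB_pascal (n : ℕ) (m : ℤ) : fB (n + 1) m = fB n m + fB n (m - 1) := by
  unfold fB
  rcases lt_trichotomy m 0 with h | h | h
  · rw [if_neg (by omega), if_neg (by omega), if_neg (by omega)]; ring
  · subst h; norm_num
  · rw [if_pos (by omega), if_pos (by omega), if_pos (by omega)]
    have h1 : m.toNat = (m - 1).toNat + 1 := by omega
    rw [h1, Nat.choose_succ_succ]
    push_cast; ring

lemma fB_pascal2 (n : ℕ) (m : ℤ) :
    fB (n + 2) m = fB n m + 2 * fB n (m - 1) + fB n (m - 2) := by
  rw [show n + 2 = (n + 1) + 1 from rfl, fB_pascal, fB_pascal, fB_pascal]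
  rw [show m - 1 - 1 = m - 2 from by ring]
  ring

/-- Reflected ballot coefficients. -/
def gB (j : ℕ) (z : ℤ) : ℝ := fB (2 * j + 1) (j - z) - fB (2 * j + 1) (j + z + 2)

lemma gB_neg_one (j : ℕ) : gB j (-1) = 0 := by
  have h : (j : ℤ) - (-1) = (j : ℤ) + (-1) + 2 := by ring
  rw [gB, h, sub_self]

lemma gB_eq_zero_of_lt (j : ℕ) (z : ℤ) (hz : (j : ℤ) < z) : gB j z = 0 := by
  unfold gB fB
  rw [if_neg (by omega), if_pos (by omega), Nat.choose_eq_zero_of_lt (by omega)]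
  norm_num

lemma gB_pascal (j : ℕ) (z : ℤ) :
    gB (j + 1) z = gB j (z - 1) + 2 * gB j z + gB j (z + 1) := by
  simp only [gB]
  push_cast
  rw [show 2 * (j + 1) + 1 = (2 * j + 1) + 2 from by ring]
  rw [fB_pascal2, fB_pascal2]
  ring_nf

lemma iter_Tr_at_zero (j : ℕ) : ∀ v : ℕ → ℝ,
    (Tr^[j] v) 0 = ∑ k ∈ Finset.range (j + 1), gB j k * v k := by
  induction j with
  | zero =>
    intro v
    rw [Finset.sum_range_one]
    norm_num [gB, fB, show Int.toNat 2 = 2 from rfl]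
  | succ j ih =>
    intro v
    rw [Function.iterate_succ_apply, ih (Tr v)]
    have hA : ∑ k ∈ Finset.range (j + 2), 2 * gB j (k : ℤ) * v k
        = ∑ k ∈ Finset.range (j + 1), 2 * gB j (k : ℤ) * v k := by
      rw [Finset.sum_range_succ (fun k => 2 * gB j (k : ℤ) * v k) (j + 1)]
      rw [gB_eq_zero_of_lt j ((j + 1 : ℕ) : ℤ) (by push_cast; omega)]
      ring
    have hB : ∑ k ∈ Finset.range (j + 2), gB j ((k : ℤ) - 1) * v k
        = ∑ k ∈ Finset.range (j + 1), gB j (k : ℤ) * v (k + 1) := by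
      rw [Finset.sum_range_succ' (fun k => gB j ((k : ℤ) - 1) * v k) (j + 1)]
      have h0 : gB j (((0 : ℕ) : ℤ) - 1) * v 0 = 0 := by
        norm_num [gB_neg_one]
      rw [h0, add_zero]
      refine Finset.sum_congr rfl fun k _ => ?_
      congr 1
      push_cast
      ring_nf
    have hC : ∑ k ∈ Finset.range (j + 2), gB j ((k : ℤ) + 1) * v k
        = ∑ k ∈ Finset.range (j + 1), gB j (k : ℤ) * (if k = 0 then 0 else v (k - 1)) := by
      rw [Finset.sum_range_succ (fun k => gB j ((k : ℤ) + 1) * v k) (j + 1),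
        Finset.sum_range_succ (fun k => gB j ((k : ℤ) + 1) * v k) j]
      rw [gB_eq_zero_of_lt j (((j + 1 : ℕ) : ℤ) + 1) (by push_cast; omega),
        gB_eq_zero_of_lt j (((j : ℕ) : ℤ) + 1) (by push_cast; omega)]
      rw [zero_mul, zero_mul, add_zero, add_zero]
      rw [Finset.sum_range_succ' (fun k => gB j (k : ℤ) * (if k = 0 then 0 else v (k - 1))) j]
      rw [if_pos rfl, mul_zero, add_zero]
      refine Finset.sum_congr rfl fun k _ => ?_
      rw [if_neg (Nat.succ_ne_zero k), Nat.add_sub_cancel]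
      norm_cast
    have expand : ∑ k ∈ Finset.range (j + 1), gB j (k : ℤ) * Tr v k
        = (∑ k ∈ Finset.range (j + 1), 2 * gB j (k : ℤ) * v k)
          + ((∑ k ∈ Finset.range (j + 1), gB j (k : ℤ) * v (k + 1))
          + (∑ k ∈ Finset.range (j + 1), gB j (k : ℤ) * (if k = 0 then 0 else v (k - 1)))) := by
      calc ∑ k ∈ Finset.range (j + 1), gB j (k : ℤ) * Tr v k
          = ∑ k ∈ Finset.range (j + 1), (2 * gB j (k : ℤ) * v k
            + (gB j (k : ℤ) * v (k + 1)
              + gB j (k : ℤ) * (if k = 0 then 0 else v (k - 1)))) := by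
            refine Finset.sum_congr rfl fun k _ => ?_
            rw [Tr]
            split_ifs <;> ring
        _ = _ := by rw [Finset.sum_add_distrib, Finset.sum_add_distrib]
    rw [expand, ← hA, ← hB, ← hC]
    symm
    calc ∑ k ∈ Finset.range (j + 2), gB (j + 1) (k : ℤ) * v k
        = ∑ k ∈ Finset.range (j + 2), (2 * gB j (k : ℤ) * v k
          + (gB j ((k : ℤ) - 1) * v k + gB j ((k : ℤ) + 1) * v k)) := by
          refine Finset.sum_congr rfl fun k _ => ?_
          rw [gB_pascal]
          ring
      _ = _ := by rw [Finset.sum_add_distrib, Finset.sum_add_distrib]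

lemma gB_nat (j k : ℕ) (h : k ≤ j) :
    gB j (k : ℤ) = ((2 * j + 1).choose (j - k) : ℝ) - ((2 * j + 1).choose (j + k + 2) : ℝ) := by
  unfold gB fB
  rw [if_pos (by omega), if_pos (by omega)]
  have h1 : ((j : ℤ) - (k : ℤ)).toNat = j - k := by omega
  have h2 : ((j : ℤ) + (k : ℤ) + 2).toNat = j + k + 2 := by omega
  rw [h1, h2]

lemma sum_gB_pow (r : ℝ) (j : ℕ) :
    ∑ k ∈ Finset.range (j + 1), gB j (k : ℤ) * r ^ k
      = ((2 * j + 1).choose j : ℝ)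
        + ∑ t ∈ Finset.range j, ((2 * j + 1).choose t : ℝ) * (r ^ (j - t) - r ^ (j - 1 - t)) := by
  have step1 : ∀ k ∈ Finset.range (j + 1), gB j (k : ℤ) * r ^ k
      = ((2 * j + 1).choose (j - k) : ℝ) * r ^ k
        - ((2 * j + 1).choose (j + k + 2) : ℝ) * r ^ k := by
    intro k hk
    rw [Finset.mem_range] at hk
    rw [gB_nat j k (by omega), sub_mul]
  rw [Finset.sum_congr rfl step1, Finset.sum_sub_distrib]
  have hfirst : ∑ k ∈ Finset.range (j + 1), ((2 * j + 1).choose (j - k) : ℝ) * r ^ k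
      = ∑ t ∈ Finset.range (j + 1), ((2 * j + 1).choose t : ℝ) * r ^ (j - t) := by
    rw [← Finset.sum_range_reflect (fun t => ((2 * j + 1).choose t : ℝ) * r ^ (j - t)) (j + 1)]
    refine Finset.sum_congr rfl fun k hk => ?_
    rw [Finset.mem_range] at hk
    rw [show j + 1 - 1 - k = j - k from by omega, Nat.sub_sub_self (by omega : k ≤ j)]
  have hsecond : ∑ k ∈ Finset.range (j + 1), ((2 * j + 1).choose (j + k + 2) : ℝ) * r ^ k
      = ∑ t ∈ Finset.range j, ((2 * j + 1).choose t : ℝ) * r ^ (j - 1 - t) := by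
    rw [Finset.sum_range_succ]
    rw [Nat.choose_eq_zero_of_lt (by omega : 2 * j + 1 < j + j + 2)]
    rw [Nat.cast_zero, zero_mul, add_zero]
    have hsym : ∀ k ∈ Finset.range j, ((2 * j + 1).choose (j + k + 2) : ℝ) * r ^ k
        = ((2 * j + 1).choose (j - 1 - k) : ℝ) * r ^ k := by
      intro k hk
      rw [Finset.mem_range] at hk
      have h : (2 * j + 1).choose (j + k + 2) = (2 * j + 1).choose (j - 1 - k) := by
        rw [← Nat.choose_symm (by omega : j + k + 2 ≤ 2 * j + 1)]
        congr 1
        omega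
      rw [h]
    rw [Finset.sum_congr rfl hsym]
    rw [← Finset.sum_range_reflect (fun t => ((2 * j + 1).choose t : ℝ) * r ^ (j - 1 - t)) j]
    refine Finset.sum_congr rfl fun k hk => ?_
    rw [Finset.mem_range] at hk
    congr 2 <;> omega
  rw [hfirst, hsecond, Finset.sum_range_succ, Nat.sub_self, pow_zero, mul_one]
  simp only [mul_sub]
  rw [Finset.sum_sub_distrib]
  ring

lemma per_term (α : ℝ) (hα0 : α ≠ 0) (hα1 : (1 : ℝ) - α ≠ 0) (j t : ℕ) (ht : t < j) :
    (α * (1 - α)) ^ j * (((1 - α) / α) ^ (j - t) - ((1 - α) / α) ^ (j - 1 - t))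
      = (1 - 2 * α) / (1 - α) ^ 2 * (α ^ t * (1 - α) ^ (2 * j + 1 - t)) := by
  obtain ⟨e, rfl⟩ : ∃ e, j = t + 1 + e := ⟨j - (t + 1), by omega⟩
  rw [show t + 1 + e - t = e + 1 from by omega,
    show t + 1 + e - 1 - t = e from by omega,
    show 2 * (t + 1 + e) + 1 - t = t + 2 * e + 3 from by omega]
  rw [mul_pow]
  rw [div_pow, div_pow]
  field_simp
  ring

lemma xZ_formula (α : ℝ) (hα0 : α ≠ 0) (hα1 : (1 : ℝ) - α ≠ 0) (j : ℕ) :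
    (α * (1 - α)) ^ j * Z α 1 j 0
      = (α * (1 - α)) ^ j * ((2 * j + 1).choose j : ℝ)
        + (1 - 2 * α) / (1 - α) ^ 2
          * ∑ t ∈ Finset.range j, ((2 * j + 1).choose t : ℝ)
            * (α ^ t * (1 - α) ^ (2 * j + 1 - t)) := by
  rw [Z_eq_iter, iter_Tr_at_zero]
  rw [show (∑ k ∈ Finset.range (j + 1), gB j (k : ℤ) * W α k)
      = ∑ k ∈ Finset.range (j + 1), gB j (k : ℤ) * ((1 - α) / α) ^ k from rfl]
  rw [sum_gB_pow, mul_add, Finset.mul_sum, Finset.mul_sum]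
  congr 1
  refine Finset.sum_congr rfl fun t ht => ?_
  rw [Finset.mem_range] at ht
  calc (α * (1 - α)) ^ j * (((2 * j + 1).choose t : ℝ)
        * (((1 - α) / α) ^ (j - t) - ((1 - α) / α) ^ (j - 1 - t)))
      = ((2 * j + 1).choose t : ℝ) * ((α * (1 - α)) ^ j
          * (((1 - α) / α) ^ (j - t) - ((1 - α) / α) ^ (j - 1 - t))) := by ring
    _ = ((2 * j + 1).choose t : ℝ) * ((1 - 2 * α) / (1 - α) ^ 2
          * (α ^ t * (1 - α) ^ (2 * j + 1 - t))) := by rw [per_term α hα0 hα1 j t ht]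
    _ = _ := by ring

lemma choose_le_two_pow' (n k : ℕ) : (n.choose k : ℝ) ≤ 2 ^ n := by
  have h : n.choose k ≤ 2 ^ n := by
    rcases le_or_gt k n with hk | hk
    · calc n.choose k ≤ ∑ m ∈ Finset.range (n + 1), n.choose m :=
          Finset.single_le_sum (fun i _ => Nat.zero_le _) (Finset.mem_range.mpr (by omega))
        _ = 2 ^ n := Nat.sum_range_choose n
    · rw [Nat.choose_eq_zero_of_lt hk]; exact Nat.zero_le _
  exact_mod_cast h

theorem Z_one_species_asymptotics' (α : ℝ) (hα0 : 0 < α) (hα2 : α < 1 / 2) :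
    Filter.Tendsto (fun j : ℕ => (α * (1 - α)) ^ j * Z α 1 j 0)
      Filter.atTop (𝓝 ((1 - 2 * α) / (1 - α) ^ 2)) := by
  have hα1 : α < 1 := by linarith
  have hαne : α ≠ 0 := ne_of_gt hα0
  have h1αpos : (0 : ℝ) < 1 - α := by linarith
  have h1αne : (1 : ℝ) - α ≠ 0 := ne_of_gt h1αpos
  set x : ℝ := α * (1 - α) with hx
  have hx0 : 0 < x := by positivity
  have hq0 : (0 : ℝ) ≤ 4 * x := by positivity
  have hq1 : 4 * x < 1 := by rw [hx]; nlinarith [sq_nonneg (1 - 2 * α)]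
  have htwo : ∀ j : ℕ, (2 : ℝ) ^ (2 * j + 1) = 2 * 4 ^ j := by
    intro j
    rw [pow_succ (2 : ℝ) (2 * j), pow_mul (2 : ℝ) 2 j]
    norm_num
    ring
  -- first term tends to 0
  have hT1 : Filter.Tendsto (fun j : ℕ => x ^ j * ((2 * j + 1).choose j : ℝ))
      Filter.atTop (𝓝 0) := by
    have hb : ∀ j : ℕ, x ^ j * ((2 * j + 1).choose j : ℝ) ≤ 2 * (4 * x) ^ j := by
      intro j
      calc x ^ j * ((2 * j + 1).choose j : ℝ) ≤ x ^ j * 2 ^ (2 * j + 1) :=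
            mul_le_mul_of_nonneg_left (choose_le_two_pow' (2 * j + 1) j) (by positivity)
        _ = 2 * (4 * x) ^ j := by
            rw [mul_pow (4 : ℝ) x j, htwo j]
            ring
    have h2 : Filter.Tendsto (fun j : ℕ => 2 * (4 * x) ^ j) Filter.atTop (𝓝 0) := by
      simpa using (tendsto_pow_atTop_nhds_zero_of_lt_one hq0 hq1).const_mul (2 : ℝ)
    exact squeeze_zero (fun j => by positivity) hb h2
  -- the binomial probability sums
  set P : ℕ → ℝ := fun j =>
    ∑ t ∈ Finset.range j, ((2 * j + 1).choose t : ℝ) * (α ^ t * (1 - α) ^ (2 * j + 1 - t))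
    with hP
  set Q : ℕ → ℝ := fun j =>
    ∑ t ∈ Finset.Ico j (2 * j + 2),
      ((2 * j + 1).choose t : ℝ) * (α ^ t * (1 - α) ^ (2 * j + 1 - t)) with hQdef
  have hPQ : ∀ j : ℕ, P j + Q j = 1 := by
    intro j
    have hfull : ∑ t ∈ Finset.range (2 * j + 2),
        ((2 * j + 1).choose t : ℝ) * (α ^ t * (1 - α) ^ (2 * j + 1 - t)) = 1 := by
      have h := add_pow α (1 - α) (2 * j + 1)
      rw [show α + (1 - α) = 1 from by ring, one_pow] at h
      rw [show (∑ t ∈ Finset.range (2 * j + 2),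
          ((2 * j + 1).choose t : ℝ) * (α ^ t * (1 - α) ^ (2 * j + 1 - t)))
        = ∑ t ∈ Finset.range (2 * j + 1 + 1),
          α ^ t * (1 - α) ^ (2 * j + 1 - t) * ((2 * j + 1).choose t : ℝ) from
        Finset.sum_congr rfl fun t _ => by ring]
      exact h.symm
    rw [hP, hQdef]
    simp only
    rw [Finset.range_eq_Ico,
      ← Finset.sum_union (Finset.Ico_disjoint_Ico_consecutive 0 j (2 * j + 2)),
      Finset.Ico_union_Ico_eq_Ico (Nat.zero_le j) (by omega : j ≤ 2 * j + 2),
      ← Finset.range_eq_Ico]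
    exact hfull
  have hQ0 : ∀ j : ℕ, 0 ≤ Q j := by
    intro j
    refine Finset.sum_nonneg fun t _ => ?_
    positivity
  have hQle : ∀ j : ℕ, Q j ≤ 2 * (1 - α) * ((j : ℝ) * (4 * x) ^ j + 2 * (4 * x) ^ j) := by
    intro j
    have hterm : ∀ t ∈ Finset.Ico j (2 * j + 2),
        ((2 * j + 1).choose t : ℝ) * (α ^ t * (1 - α) ^ (2 * j + 1 - t))
          ≤ 2 ^ (2 * j + 1) * (α ^ j * (1 - α) ^ (j + 1)) := by
      intro t ht
      rw [Finset.mem_Ico] at ht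
      obtain ⟨s, rfl⟩ : ∃ s, t = j + s := ⟨t - j, by omega⟩
      have hpow : α ^ (j + s) * (1 - α) ^ (2 * j + 1 - (j + s))
          ≤ α ^ j * (1 - α) ^ (j + 1) := by
        rw [show 2 * j + 1 - (j + s) = j + 1 - s from by omega, pow_add]
        have h1 : α ^ s ≤ (1 - α) ^ s :=
          pow_le_pow_left₀ (le_of_lt hα0) (by linarith) s
        calc α ^ j * α ^ s * (1 - α) ^ (j + 1 - s)
            ≤ α ^ j * (1 - α) ^ s * (1 - α) ^ (j + 1 - s) := by
              have := mul_le_mul_of_nonneg_left h1 (by positivity : (0:ℝ) ≤ α ^ j)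
              exact mul_le_mul_of_nonneg_right this (by positivity)
          _ = α ^ j * (1 - α) ^ (j + 1) := by
              rw [mul_assoc, ← pow_add, show s + (j + 1 - s) = j + 1 from by omega]
      calc ((2 * j + 1).choose (j + s) : ℝ) * (α ^ (j + s) * (1 - α) ^ (2 * j + 1 - (j + s)))
          ≤ 2 ^ (2 * j + 1) * (α ^ (j + s) * (1 - α) ^ (2 * j + 1 - (j + s))) :=
            mul_le_mul_of_nonneg_right (choose_le_two_pow' (2 * j + 1) (j + s)) (by positivity)
        _ ≤ 2 ^ (2 * j + 1) * (α ^ j * (1 - α) ^ (j + 1)) :=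
            mul_le_mul_of_nonneg_left hpow (by positivity)
    calc Q j ≤ ∑ _t ∈ Finset.Ico j (2 * j + 2),
          (2 : ℝ) ^ (2 * j + 1) * (α ^ j * (1 - α) ^ (j + 1)) := Finset.sum_le_sum hterm
      _ = ((j : ℝ) + 2) * (2 ^ (2 * j + 1) * (α ^ j * (1 - α) ^ (j + 1))) := by
          rw [Finset.sum_const, Nat.card_Ico,
            show 2 * j + 2 - j = j + 2 from by omega, nsmul_eq_mul]
          push_cast
          ring
      _ = 2 * (1 - α) * ((j : ℝ) * (4 * x) ^ j + 2 * (4 * x) ^ j) := by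
          rw [mul_pow (4 : ℝ) x j, hx, mul_pow α (1 - α) j, htwo j,
            pow_succ (1 - α) j]
          ring
  have hQtend : Filter.Tendsto Q Filter.atTop (𝓝 0) := by
    have h1 : Filter.Tendsto (fun j : ℕ => (j : ℝ) * (4 * x) ^ j) Filter.atTop (𝓝 0) :=
      tendsto_self_mul_const_pow_of_lt_one hq0 hq1
    have h2 : Filter.Tendsto (fun j : ℕ => 2 * (4 * x) ^ j) Filter.atTop (𝓝 0) := by
      simpa using (tendsto_pow_atTop_nhds_zero_of_lt_one hq0 hq1).const_mul (2 : ℝ)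
    have h3 := (h1.add h2).const_mul (2 * (1 - α))
    rw [add_zero, mul_zero] at h3
    exact squeeze_zero hQ0 hQle h3
  have hPtend : Filter.Tendsto P Filter.atTop (𝓝 1) := by
    have h : P = fun j => 1 - Q j := by
      funext j
      have := hPQ j
      linarith
    rw [h]
    simpa using hQtend.const_sub (1 : ℝ)
  have hfinal := hT1.add (hPtend.const_mul ((1 - 2 * α) / (1 - α) ^ 2))
  have heq : ∀ j : ℕ, x ^ j * ((2 * j + 1).choose j : ℝ)
      + (1 - 2 * α) / (1 - α) ^ 2 * P j = x ^ j * Z α 1 j 0 :=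
    fun j => (xZ_formula α hαne h1αne j).symm
  have hfinal2 := hfinal.congr heq
  rw [zero_add, mul_one] at hfinal2
  exact hfinal2

/-- for `0 < α < 1/2`,
`lim_{j→∞} (α(1−α))^j Z^{α,1}(j,0) = (1−2α)/(1−α)²`. -/
theorem Z_one_species_asymptotics (α : ℝ) (hα0 : 0 < α) (hα2 : α < 1 / 2) :
    Filter.Tendsto (fun j : ℕ => (α * (1 - α)) ^ j * Z α 1 j 0)
      Filter.atTop (𝓝 ((1 - 2 * α) / (1 - α) ^ 2)) := by
  exact Z_one_species_asymptotics' α hα0 hα2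

end TASEP
end
end
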